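/- Let ψⁱ, ψʲ, ψᵐ ∈ ℂ² with the standard Hermitian product, and suppose |P₋ψʲ|²⟨P₋ψⁱ, P₋ψᵐ⟩ = |P₊ψʲ|²⟨P₊ψⁱ, P₊ψᵐ⟩ where P± = (1/2)(I ± iγ₁γ₂). Then ⟨ψⁱ, γ₁ψʲ⟩⟨ψʲ, γ₂ψᵐ⟩ - ⟨ψⁱ, γ₂ψʲ⟩⟨ψʲ, γ₁ψᵐ⟩ = 2⟨ψⁱ, γ₁γ₂ψᵐ⟩|ψʲ|². -/
import Mathlib


open Matrix Complex

noncomputable section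

def g1 : Matrix (Fin 2) (Fin 2) ℂ := !![0, 1; -1, 0]
def g2 : Matrix (Fin 2) (Fin 2) ℂ := !![0, Complex.I; Complex.I, 0]
def vol : Matrix (Fin 2) (Fin 2) ℂ := Complex.I • (g1 * g2)
def inn (u v : Fin 2 → ℂ) : ℂ := star (u 0) * v 0 + star (u 1) * v 1
def Pp : Matrix (Fin 2) (Fin 2) ℂ := (1/2 : ℂ) • (1 + vol)
def Pm : Matrix (Fin 2) (Fin 2) ℂ := (1/2 : ℂ) • (1 - vol)

theorem fierz_identity_majorana (ψi ψj ψm : Fin 2 → ℂ)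
    (h : inn (Pm.mulVec ψj) (Pm.mulVec ψj) * inn (Pm.mulVec ψi) (Pm.mulVec ψm)
       = inn (Pp.mulVec ψj) (Pp.mulVec ψj) * inn (Pp.mulVec ψi) (Pp.mulVec ψm)) :
    inn ψi (g1.mulVec ψj) * inn ψj (g2.mulVec ψm)
      - inn ψi (g2.mulVec ψj) * inn ψj (g1.mulVec ψm)
    = 2 * inn ψi ((g1 * g2).mulVec ψm) * inn ψj ψj := by
  simp [inn, Pp, Pm, vol, g1, g2, Matrix.mulVec, Matrix.mul_apply, dotProduct,
    Fin.sum_univ_two, Matrix.one_apply] at h ⊢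
  linear_combination (-2*Complex.I)*h
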